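/- Let R be a ring, (M, ≤) a partially ordered set, and b : M → R a map whose values form a ℤ-linearly independent family. Assume: (Decomposition) for all μ, ν ∈ M there is a finitely supported function a_{μ,ν} : M → ℤ with b(μ)·b(ν) = Σ_λ a_{μ,ν}(λ)·b(λ), such that a_{μ,ν} is positive on its support and its support is nonempty and has a greatest element with respect to ≤, denoted μ ⊙ ν; and (Monotonicity) for all μ, ν, λ ∈ M, μ ≤ ν implies λ ⊙ μ ≤ λ ⊙ ν and μ ⊙ λ ≤ ν ⊙ λ. Then the operation ⊙ is associative: (μ ⊙ ν) ⊙ λ = μ ⊙ (ν ⊙ λ) for all μ, ν, λ ∈ M. -/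

import Mathlib

/-- Auxiliary: if `f` is positive on its support with greatest element `m0`, each `g κ` is
positive on its support with greatest element `e κ`, and `e κ ≤ e m0` for `κ` in the
support of `f`, then the support of `f.sum fun κ c => c • g κ` has greatest element
`e m0`. -/
lemma sum_support_isGreatest {M : Type*} [PartialOrder M]
    (f : M →₀ ℤ) (g : M → (M →₀ ℤ)) (e : M → M)
    (hf : ∀ κ ∈ f.support, 0 < f κ)
    (hg : ∀ κ x, x ∈ (g κ).support → 0 < g κ x)
    (hge : ∀ κ, IsGreatest ((g κ).support : Set M) (e κ))
    (m0 : M) (hm0 : m0 ∈ f.support)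
    (hmono : ∀ κ ∈ f.support, e κ ≤ e m0) :
    IsGreatest (((f.sum fun κ c => c • g κ).support : Set M)) (e m0) := by
  have happly : ∀ x, (f.sum fun κ c => c • g κ) x
      = ∑ κ ∈ f.support, f κ * g κ x := by
    intro x
    rw [Finsupp.sum_apply]
    simp [Finsupp.sum, Finsupp.smul_apply]
  constructor
  · have hpos : 0 < (f.sum fun κ c => c • g κ) (e m0) := by
      rw [happly]
      refine Finset.sum_pos' (fun κ hκ => ?_)
        ⟨m0, hm0, mul_pos (hf m0 hm0) (hg m0 _ (hge m0).1)⟩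
      rcases (eq_or_ne (g κ (e m0)) 0) with h | h
      · simp [h]
      · exact le_of_lt (mul_pos (hf κ hκ) (hg κ _ (Finsupp.mem_support_iff.2 h)))
    exact Finsupp.mem_support_iff.2 (ne_of_gt hpos)
  · intro x hx
    have : (f.sum fun κ c => c • g κ) x ≠ 0 := Finsupp.mem_support_iff.1 hx
    rw [happly] at this
    obtain ⟨κ, hκ, hne⟩ := Finset.exists_ne_zero_of_sum_ne_zero this
    have hx' : x ∈ (g κ).support := Finsupp.mem_support_iff.2 (right_ne_zero_of_mul hne)
    exact le_trans ((hge κ).2 hx') (hmono κ hκ)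

/-- Abstract decomposition property of a Grothendieck ring with basis `b` indexed by a
poset `M`: the product of two basis elements decomposes with positive coefficients, the
set of parameters in the decomposition having a greatest element `μ ⊙ ν`.  If `⊙` is
monotone in each argument, then `⊙` is associative. -/
theorem odot_assoc {R M : Type*} [Ring R] [PartialOrder M]
    (b : M → R) (hb : LinearIndependent ℤ b)
    (a : M → M → (M →₀ ℤ))
    (odot : M → M → M)
    (hdec : ∀ μ ν, b μ * b ν = (a μ ν).sum fun l c => c • b l)
    (hpos : ∀ μ ν l, l ∈ (a μ ν).support → 0 < a μ ν l)
    (hgr : ∀ μ ν, IsGreatest ((a μ ν).support : Set M) (odot μ ν))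
    (hmono : ∀ μ ν l : M, μ ≤ ν → odot l μ ≤ odot l ν ∧ odot μ l ≤ odot ν l) :
    ∀ μ ν l : M, odot (odot μ ν) l = odot μ (odot ν l) := by
  intro μ ν l
  set L := Finsupp.linearCombination ℤ b with hL
  have hdec' : ∀ μ ν, b μ * b ν = L (a μ ν) := by
    intro μ ν; rw [hdec, hL, Finsupp.linearCombination_apply]
  set c₁ : M →₀ ℤ := (a μ ν).sum fun κ c => c • a κ l with hc₁
  set c₂ : M →₀ ℤ := (a ν l).sum fun κ c => c • a μ κ with hc₂
  have hLc₁ : L c₁ = (b μ * b ν) * b l := by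
    rw [hc₁, map_finsuppSum]
    rw [hdec' μ ν, Finsupp.linearCombination_apply, Finsupp.sum_mul]
    refine Finsupp.sum_congr fun κ hκ => ?_
    rw [map_smul, ← hdec' κ l, smul_mul_assoc]
  have hLc₂ : L c₂ = b μ * (b ν * b l) := by
    rw [hc₂, map_finsuppSum]
    rw [hdec' ν l, Finsupp.linearCombination_apply, Finsupp.mul_sum]
    refine Finsupp.sum_congr fun κ hκ => ?_
    rw [map_smul, ← hdec' μ κ, mul_smul_comm]
  have hc : c₁ = c₂ := by
    apply (hb : Function.Injective L)
    rw [hLc₁, hLc₂, mul_assoc]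
  have h1 : IsGreatest ((c₁.support : Set M)) (odot (odot μ ν) l) :=
    sum_support_isGreatest (a μ ν) (fun κ => a κ l) (fun κ => odot κ l)
      (hpos μ ν) (fun κ x => hpos κ l x) (fun κ => hgr κ l)
      (odot μ ν) (hgr μ ν).1
      (fun κ hκ => (hmono κ (odot μ ν) l ((hgr μ ν).2 hκ)).2)
  have h2 : IsGreatest ((c₂.support : Set M)) (odot μ (odot ν l)) :=
    sum_support_isGreatest (a ν l) (fun κ => a μ κ) (fun κ => odot μ κ)
      (hpos ν l) (fun κ x => hpos μ κ x) (fun κ => hgr μ κ)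
      (odot ν l) (hgr ν l).1
      (fun κ hκ => (hmono κ (odot ν l) μ ((hgr ν l).2 hκ)).1)
  rw [hc] at h1
  exact h1.unique h2
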